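/- Let p > 2 be a real number. Then f is bounded on the open interval (0,1): there exists a constant C such that |f(u)| ≤ C for all u ∈ (0,1). -/
import Mathlib

/-- The function f from Lemma 1 of the paper. -/
noncomputable def f (p u : ℝ) : ℝ :=
  (1 - u ^ (2:ℝ)) ^ p / (1 + u ^ p) *
    ((1 + u ^ (p - 1)) ^ (p / (p - 1)) - (1 - u ^ (p - 1)) ^ (p / (p - 1))) /
    ((1 + u) ^ p * (1 - u ^ (p - 1)) ^ (p / (p - 1)) -
      (1 - u) ^ p * (1 + u ^ (p - 1)) ^ (p / (p - 1)))

theorem stmt_11 (p : ℝ) (hp : 2 < p) :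
    ∃ C : ℝ, ∀ u ∈ Set.Ioo (0:ℝ) 1, |f p u| ≤ C := by
  have hp1 : (1:ℝ) < p - 1 := by linarith
  have hp0 : (0:ℝ) < p := by linarith
  refine ⟨2 ^ p / (p - 2), fun u hu => ?_⟩
  obtain ⟨hu0, hu1⟩ := hu
  unfold f
  obtain ⟨q, hqdef⟩ : ∃ q : ℝ, q = p / (p - 1) := ⟨_, rfl⟩
  rw [← hqdef]
  obtain ⟨v, hvdef⟩ : ∃ v : ℝ, v = u ^ (p - 1) := ⟨_, rfl⟩
  rw [← hvdef]
  obtain ⟨a, hadef⟩ : ∃ a : ℝ, a = 1 + v := ⟨_, rfl⟩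
  obtain ⟨b, hbdef⟩ : ∃ b : ℝ, b = 1 - v := ⟨_, rfl⟩
  rw [← hadef, ← hbdef]
  have hq0 : 0 < q := by rw [hqdef]; positivity
  have hqp : q < p := by rw [hqdef, div_lt_iff₀ (by linarith)]; nlinarith
  have hpq : (0:ℝ) < p - q := by linarith
  have hCq : q / (p - q) = 1 / (p - 2) := by
    rw [div_eq_div_iff hpq.ne' (by linarith : p - 2 ≠ 0), hqdef]
    field_simp
    ring
  have hv0 : 0 < v := hvdef ▸ Real.rpow_pos_of_pos hu0 _
  have hv1 : v < 1 := hvdef ▸ Real.rpow_lt_one hu0.le hu1 (by linarith)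
  have hvu : v < u := by
    rw [hvdef]
    calc u ^ (p - 1) < u ^ (1:ℝ) := Real.rpow_lt_rpow_of_exponent_gt hu0 hu1 hp1
    _ = u := Real.rpow_one u
  have ha : 0 < a := by rw [hadef]; linarith
  have hb : 0 < b := by rw [hbdef]; linarith
  have h1u : (0:ℝ) < 1 + u := by linarith
  have h1u' : (0:ℝ) < 1 - u := by linarith
  obtain ⟨r, hrdef⟩ : ∃ r : ℝ, r = (1 - u) / (1 + u) := ⟨_, rfl⟩
  obtain ⟨s, hsdef⟩ : ∃ s : ℝ, s = b / a := ⟨_, rfl⟩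
  have hr0 : 0 < r := by rw [hrdef]; positivity
  have hs0 : 0 < s := by rw [hsdef]; positivity
  have hr1 : r < 1 := by rw [hrdef, div_lt_one h1u]; linarith
  have hs1 : s < 1 := by rw [hsdef, div_lt_one ha, hadef, hbdef]; linarith
  have hrs : r ≤ s := by
    rw [hrdef, hsdef, div_le_div_iff₀ h1u ha, hadef, hbdef]
    nlinarith
  -- powers
  have hrp : 0 < r ^ p := Real.rpow_pos_of_pos hr0 p
  have hrq : 0 < r ^ q := Real.rpow_pos_of_pos hr0 q
  have hsq : 0 < s ^ q := Real.rpow_pos_of_pos hs0 q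
  have hsq1 : s ^ q ≤ 1 := Real.rpow_le_one hs0.le hs1.le hq0.le
  have hrpq : r ^ p < r ^ q := Real.rpow_lt_rpow_of_exponent_gt hr0 hr1 hqp
  have hrsq : r ^ q ≤ s ^ q := Real.rpow_le_rpow hr0.le hrs hq0.le
  have hsqrp : r ^ p < s ^ q := lt_of_lt_of_le hrpq hrsq
  -- log facts
  have hlogr : Real.log r < 0 := Real.log_neg hr0 hr1
  have hlogs : Real.log s < 0 := Real.log_neg hs0 hs1
  have hlogrs : Real.log r ≤ Real.log s := Real.log_le_log hr0 hrs
  -- inequality 1 : 1 - s^q ≤ q * (-log s)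
  have h1 : 1 - s ^ q ≤ q * -Real.log s := by
    have h := Real.add_one_le_exp (Real.log s * q)
    rw [← Real.rpow_def_of_pos hs0] at h
    nlinarith
  -- inequality 2 : r^p * ((p - q) * (-log r)) ≤ r^q - r^p
  have h2 : r ^ p * ((p - q) * -Real.log r) ≤ r ^ q - r ^ p := by
    have hid : r ^ q = r ^ p * Real.exp ((q - p) * Real.log r) := by
      rw [Real.rpow_def_of_pos hr0, Real.rpow_def_of_pos hr0, ← Real.exp_add]
      ring_nf
    have hexp := mul_le_mul_of_nonneg_left
      (Real.add_one_le_exp ((q - p) * Real.log r)) hrp.le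
    rw [hid]
    nlinarith
  -- main inequality
  have hmain : r ^ p * (1 - s ^ q) ≤ 1 / (p - 2) * (s ^ q - r ^ p) := by
    have c1 : r ^ p * (1 - s ^ q) ≤ r ^ p * (q * -Real.log s) :=
      mul_le_mul_of_nonneg_left h1 hrp.le
    have c2 : r ^ p * (q * -Real.log s) ≤ r ^ p * (q * -Real.log r) := by
      apply mul_le_mul_of_nonneg_left _ hrp.le
      apply mul_le_mul_of_nonneg_left _ hq0.le
      linarith
    have key : q / (p - q) * (p - q) = q := div_mul_cancel₀ q hpq.ne'
    have c3 : r ^ p * (q * -Real.log r)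
        = q / (p - q) * (r ^ p * ((p - q) * -Real.log r)) := by
      linear_combination (r ^ p * Real.log r) * key
    have c4 : q / (p - q) * (r ^ p * ((p - q) * -Real.log r))
        ≤ q / (p - q) * (s ^ q - r ^ p) := by
      apply mul_le_mul_of_nonneg_left _ (div_nonneg hq0.le hpq.le)
      linarith
    calc r ^ p * (1 - s ^ q) ≤ r ^ p * (q * -Real.log s) := c1
      _ ≤ r ^ p * (q * -Real.log r) := c2
      _ = q / (p - q) * (r ^ p * ((p - q) * -Real.log r)) := c3
      _ ≤ q / (p - q) * (s ^ q - r ^ p) := c4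
      _ = 1 / (p - 2) * (s ^ q - r ^ p) := by rw [hCq]
  -- multiplicative identities
  have hup : 0 < (1 + u) ^ p := Real.rpow_pos_of_pos h1u p
  have haq : 0 < a ^ q := Real.rpow_pos_of_pos ha q
  have hrpmul : (1 - u) ^ p = r ^ p * (1 + u) ^ p := by
    rw [← Real.mul_rpow hr0.le h1u.le, hrdef, div_mul_cancel₀ _ h1u.ne']
  have hsqmul : b ^ q = s ^ q * a ^ q := by
    rw [← Real.mul_rpow hs0.le ha.le, hsdef, div_mul_cancel₀ _ ha.ne']
  obtain ⟨N, hNdef⟩ : ∃ N : ℝ,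
      N = (1 - u ^ (2:ℝ)) ^ p / (1 + u ^ p) * (a ^ q - b ^ q) := ⟨_, rfl⟩
  obtain ⟨D, hDdef⟩ : ∃ D : ℝ,
      D = (1 + u) ^ p * b ^ q - (1 - u) ^ p * a ^ q := ⟨_, rfl⟩
  rw [← hNdef, ← hDdef]
  have hDeq : D = (1 + u) ^ p * a ^ q * (s ^ q - r ^ p) := by
    rw [hDdef, hsqmul, hrpmul]; ring
  have hDpos : 0 < D := by
    rw [hDeq]
    exact mul_pos (mul_pos hup haq) (by linarith)
  have habq : a ^ q - b ^ q = a ^ q * (1 - s ^ q) := by rw [hsqmul]; ring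
  have hu2pos : (0:ℝ) < 1 - u ^ (2:ℝ) := by
    have : u ^ (2:ℝ) < 1 ^ (2:ℝ) := Real.rpow_lt_rpow hu0.le hu1 (by norm_num)
    rw [Real.one_rpow] at this
    linarith
  have hx : 0 ≤ (1 - u ^ (2:ℝ)) ^ p := Real.rpow_nonneg hu2pos.le p
  have hupow : (0:ℝ) < u ^ p := Real.rpow_pos_of_pos hu0 p
  have hNnonneg : 0 ≤ N := by
    rw [hNdef, habq]
    exact mul_nonneg (div_nonneg hx (by linarith))
      (mul_nonneg haq.le (by linarith))
  have hsplit : (1 - u ^ (2:ℝ)) ^ p = (1 + u) ^ p * (1 - u) ^ p := by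
    rw [← Real.mul_rpow h1u.le h1u'.le]
    congr 1
    have hu2 : u ^ (2:ℝ) = u * u := by
      rw [show (2:ℝ) = ((2:ℕ):ℝ) by norm_num, Real.rpow_natCast]; ring
    rw [hu2]; ring
  have hNle : N ≤ 2 ^ p / (p - 2) * D := by
    have hupb : (1 + u) ^ p ≤ 2 ^ p :=
      Real.rpow_le_rpow (by linarith) (by linarith) hp0.le
    have step1 : N ≤ (1 - u ^ (2:ℝ)) ^ p * (a ^ q - b ^ q) := by
      rw [hNdef]
      have hab : 0 ≤ a ^ q - b ^ q := by
        rw [habq]; exact mul_nonneg haq.le (by linarith)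
      have hdiv : (1 - u ^ (2:ℝ)) ^ p / (1 + u ^ p) ≤ (1 - u ^ (2:ℝ)) ^ p := by
        rw [div_le_iff₀ (by linarith : (0:ℝ) < 1 + u ^ p)]
        exact le_mul_of_one_le_right hx (by linarith)
      exact mul_le_mul_of_nonneg_right hdiv hab
    have step2 : (1 - u ^ (2:ℝ)) ^ p * (a ^ q - b ^ q)
        = (1 + u) ^ p * ((1 + u) ^ p * a ^ q * (r ^ p * (1 - s ^ q))) := by
      rw [hsplit, habq, hrpmul]; ring
    have hnn : 0 ≤ (1 + u) ^ p * a ^ q * (r ^ p * (1 - s ^ q)) :=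
      mul_nonneg (mul_nonneg hup.le haq.le) (mul_nonneg hrp.le (by linarith))
    have step3 : (1 + u) ^ p * ((1 + u) ^ p * a ^ q * (r ^ p * (1 - s ^ q)))
        ≤ 2 ^ p * ((1 + u) ^ p * a ^ q * (1 / (p - 2) * (s ^ q - r ^ p))) := by
      have hinner : (1 + u) ^ p * a ^ q * (r ^ p * (1 - s ^ q))
          ≤ (1 + u) ^ p * a ^ q * (1 / (p - 2) * (s ^ q - r ^ p)) :=
        mul_le_mul_of_nonneg_left hmain (mul_nonneg hup.le haq.le)
      calc (1 + u) ^ p * ((1 + u) ^ p * a ^ q * (r ^ p * (1 - s ^ q)))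
          ≤ 2 ^ p * ((1 + u) ^ p * a ^ q * (r ^ p * (1 - s ^ q))) :=
            mul_le_mul_of_nonneg_right hupb hnn
        _ ≤ 2 ^ p * ((1 + u) ^ p * a ^ q * (1 / (p - 2) * (s ^ q - r ^ p))) :=
            mul_le_mul_of_nonneg_left hinner (by positivity)
    calc N ≤ (1 - u ^ (2:ℝ)) ^ p * (a ^ q - b ^ q) := step1
      _ = (1 + u) ^ p * ((1 + u) ^ p * a ^ q * (r ^ p * (1 - s ^ q))) := step2
      _ ≤ 2 ^ p * ((1 + u) ^ p * a ^ q * (1 / (p - 2) * (s ^ q - r ^ p))) := step3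
      _ = 2 ^ p / (p - 2) * D := by rw [hDeq]; ring
  rw [abs_of_nonneg (div_nonneg hNnonneg hDpos.le), div_le_iff₀ hDpos]
  calc N ≤ 2 ^ p / (p - 2) * D := hNle
    _ = 2 ^ p / (p - 2) * D := rfl
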